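/- For a weakly increasing vector x ∈ ℤ_{≥0}^k whose nonzero values form a set {1,...,r}, define B(x) := A(x) ∪ {i : 1 ≤ i ≤ k, x_i > 0}, where A(x) = {(i,j,+) : i < j, x_i + x_j > 0} ∪ {(i,j,−) : i < j, x_j − x_i > 0}. Then the map x ↦ B(x) is injective on the set of such canonical vectors: B(x) = B(y) implies x = y. -/

import Mathlib

/-- An ordered partition `[k₀, k₁, ..., k_r]` of `k`. -/
def IsOrderedPartition (k : ℕ) (p : List ℕ) : Prop :=
  p ≠ [] ∧ (∀ a ∈ p.tail, 0 < a) ∧ p.sum = k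

/-- The canonical weakly increasing vector of an ordered partition. -/
def canonVec (p : List ℕ) (j : ℕ) : ℕ :=
  ((Finset.range p.length).filter fun i => (p.take (i + 1)).sum ≤ j).card

/-- `A(x)`: `(i,j,+)` records `x_i + x_j > 0` and `(i,j,−)` records `x_j − x_i > 0`. -/
def Aset (k : ℕ) (x : Fin k → ℕ) : Set (Fin k × Fin k × Bool) :=
  {t | t.1 < t.2.1 ∧ (if t.2.2 then 0 < x t.1 + x t.2.1 else x t.1 < x t.2.1)}

/-- `B(x) = A(x) ∪ {i : x_i > 0}`, encoding the noncompact roots `±e_i ± e_j` and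
`±2e_i` of `gl_{2k}(ℝ)` positive on `x`. -/
def Bset (k : ℕ) (x : Fin k → ℕ) : Set ((Fin k × Fin k × Bool) ⊕ Fin k) :=
  Sum.inl '' Aset k x ∪ Sum.inr '' {i | 0 < x i}

lemma prefixSum_strictMono {p : List ℕ} (hp : ∀ a ∈ p.tail, 0 < a)
    {i j : ℕ} (hij : i < j) (hj : j < p.length) :
    (p.take (i + 1)).sum < (p.take (j + 1)).sum := by
  induction j with
  | zero => omega
  | succ n ih =>
    have hn1 : n + 1 < p.length := hj
    have hmem : p[n + 1] ∈ p.tail := by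
      have ht : n < p.tail.length := by
        rcases p with _ | ⟨a, l⟩
        · simp at hn1
        · simpa using Nat.lt_of_succ_lt_succ hn1
      have := List.getElem_tail ht
      rw [← this]
      exact List.getElem_mem ht
    have hpos : 0 < p[n + 1] := hp _ hmem
    have hstep : (p.take (n + 1)).sum < (p.take (n + 2)).sum := by
      rw [List.sum_take_succ _ (n + 1) hn1]
      omega
    rcases Nat.lt_succ_iff_lt_or_eq.mp hij with h' | h'
    · exact (ih h' (by omega)).trans hstep
    · subst h'; exact hstep

lemma canonVec_mono {p : List ℕ} {m : ℕ} : canonVec p m ≤ canonVec p (m + 1) := by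
  apply Finset.card_le_card
  intro i hi
  simp only [Finset.mem_filter] at hi ⊢
  exact ⟨hi.1, by omega⟩

lemma canonVec_step {p : List ℕ} (hp : ∀ a ∈ p.tail, 0 < a) {m : ℕ} :
    canonVec p (m + 1) ≤ canonVec p m + 1 := by
  unfold canonVec
  have hsub : ((Finset.range p.length).filter fun i => (p.take (i + 1)).sum ≤ m + 1) ⊆
      ((Finset.range p.length).filter fun i => (p.take (i + 1)).sum ≤ m) ∪
      ((Finset.range p.length).filter fun i => (p.take (i + 1)).sum = m + 1) := by
    intro i hi
    simp only [Finset.mem_filter, Finset.mem_union] at hi ⊢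
    obtain ⟨hr, hs⟩ := hi
    by_cases hc : (p.take (i + 1)).sum ≤ m
    · exact Or.inl ⟨hr, hc⟩
    · exact Or.inr ⟨hr, by omega⟩
  have hone : ((Finset.range p.length).filter fun i => (p.take (i + 1)).sum = m + 1).card ≤ 1 := by
    rw [Finset.card_le_one]
    intro a ha b hb
    simp only [Finset.mem_filter, Finset.mem_range] at ha hb
    by_contra hab
    rcases Nat.lt_or_ge a b with h' | h'
    · have := prefixSum_strictMono hp h' hb.1; omega
    · have hba : b < a := by omega
      have := prefixSum_strictMono hp hba ha.1; omega
  calc _ ≤ _ := Finset.card_le_card hsub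
    _ ≤ _ + _ := Finset.card_union_le _ _
    _ ≤ _ := by omega

lemma canonVec_zero_le_one {p : List ℕ} (hp : ∀ a ∈ p.tail, 0 < a) :
    canonVec p 0 ≤ 1 := by
  unfold canonVec
  rw [Finset.card_le_one]
  intro a ha b hb
  simp only [Finset.mem_filter, Finset.mem_range] at ha hb
  by_contra hab
  rcases Nat.lt_or_ge a b with h' | h'
  · have := prefixSum_strictMono hp h' hb.1; omega
  · have hba : b < a := by omega
    have := prefixSum_strictMono hp hba ha.1; omega

/-- The map `x ↦ B(x)` is injective on canonical vectors of ordered partitions of `k`. -/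
theorem stmt_3 (k : ℕ) (x y : Fin k → ℕ)
    (hx : ∃ p, IsOrderedPartition k p ∧ x = fun j : Fin k => canonVec p j)
    (hy : ∃ p, IsOrderedPartition k p ∧ y = fun j : Fin k => canonVec p j)
    (h : Bset k x = Bset k y) : x = y := by
  obtain ⟨p, ⟨_, hpt, _⟩, rfl⟩ := hx
  obtain ⟨q, ⟨_, hqt, _⟩, rfl⟩ := hy
  have hpos : ∀ i : Fin k, (0 < canonVec p ↑i ↔ 0 < canonVec q ↑i) := by
    intro i
    have := Set.ext_iff.mp h (Sum.inr i)
    simpa [Bset, Aset] using this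
  have hlt : ∀ i j : Fin k, i < j →
      (canonVec p ↑i < canonVec p ↑j ↔ canonVec q ↑i < canonVec q ↑j) := by
    intro i j hij
    have := Set.ext_iff.mp h (Sum.inl (i, j, false))
    simpa [Bset, Aset, hij] using this
  funext j
  obtain ⟨n, hn⟩ := j
  induction n with
  | zero =>
    have h1 := canonVec_zero_le_one hpt
    have h2 := canonVec_zero_le_one hqt
    have h3 := hpos ⟨0, hn⟩
    simp only [Fin.val_mk] at h3
    show canonVec p 0 = canonVec q 0
    omega
  | succ m ih =>
    have hm : m < k := by omega
    have ihm := ih hm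
    have hmono1 : canonVec p m ≤ canonVec p (m + 1) := canonVec_mono
    have hmono2 : canonVec q m ≤ canonVec q (m + 1) := canonVec_mono
    have hstep1 : canonVec p (m + 1) ≤ canonVec p m + 1 := canonVec_step hpt
    have hstep2 : canonVec q (m + 1) ≤ canonVec q m + 1 := canonVec_step hqt
    have hl := hlt ⟨m, hm⟩ ⟨m + 1, hn⟩ (by simp [Fin.lt_def])
    simp only [Fin.val_mk] at hl ihm
    show canonVec p (m + 1) = canonVec q (m + 1)
    omega
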